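/- (Schmidt–Eckart–Young–Mirsky, subspace form) For a finite family of vectors S in a Hilbert space V and any N, the span of the first N POD modes minimizes ∑_{s∈S} ‖s − P_X(s)‖² over all N-dimensional subspaces X of V, and the minimum equals the sum of the squares of the singular values with index greater than N. -/

import Mathlib

open Finset RealInnerProductSpace

section Helpers

lemma seym_sum_filter_lt_eq {M : Type*} [AddCommMonoid M] {k N : ℕ} (hN : N ≤ k) (f : Fin k → M) :
    ∑ j ∈ univ.filter (fun j : Fin k => (j : ℕ) < N), f j
      = ∑ n : Fin N, f (Fin.castLE hN n) := by
  refine Finset.sum_bij' (fun j hj => (⟨(j : ℕ), (Finset.mem_filter.1 hj).2⟩ : Fin N))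
    (fun n _ => Fin.castLE hN n) ?_ ?_ ?_ ?_ ?_
  · intros; exact Finset.mem_univ _
  · intro n _; simp [Finset.mem_filter, n.2]
  · intro j hj; ext; simp
  · intro n _; ext; simp
  · intro j hj; congr 1

lemma seym_card_filter_lt {k N : ℕ} (hN : N ≤ k) :
    ((univ.filter (fun j : Fin k => (j : ℕ) < N)).card : ℝ) = N := by
  have := seym_sum_filter_lt_eq hN (fun _ : Fin k => (1 : ℝ))
  simpa using this

lemma seym_rearrange {k N : ℕ} (hN : N ≤ k) (a c : Fin k → ℝ)
    (ha : Antitone a) (ha0 : ∀ j, 0 ≤ a j) (hc0 : ∀ j, 0 ≤ c j) (hc1 : ∀ j, c j ≤ 1)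
    (hcs : ∑ j, c j ≤ N) :
    ∑ j, a j * c j ≤ ∑ j ∈ univ.filter (fun j : Fin k => (j : ℕ) < N), a j := by
  classical
  set L := univ.filter (fun j : Fin k => (j : ℕ) < N) with hL
  set G := univ.filter (fun j : Fin k => ¬ ((j : ℕ) < N)) with hG
  have hsplit : ∀ f : Fin k → ℝ, ∑ j, f j = ∑ j ∈ L, f j + ∑ j ∈ G, f j := by
    intro f; rw [hL, hG, Finset.sum_filter_add_sum_filter_not]
  by_cases hNk : N < k
  · set t := a ⟨N, hNk⟩ with ht
    have ht0 : 0 ≤ t := ha0 _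
    have htle : ∀ j ∈ L, t ≤ a j := by
      intro j hj
      have hj' : (j : ℕ) < N := (Finset.mem_filter.1 hj).2
      exact ha (by simpa [Fin.le_def] using hj'.le)
    have hGle : ∀ j ∈ G, a j ≤ t := by
      intro j hj
      have hj' : N ≤ (j : ℕ) := Nat.le_of_not_lt (Finset.mem_filter.1 hj).2
      exact ha (by simpa [Fin.le_def] using hj')
    have h1 : ∑ j ∈ G, a j * c j ≤ t * ∑ j ∈ G, c j := by
      rw [Finset.mul_sum]
      exact Finset.sum_le_sum fun j hj =>
        mul_le_mul_of_nonneg_right (hGle j hj) (hc0 j)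
    have h2 : ∑ j ∈ G, c j ≤ (N : ℝ) - ∑ j ∈ L, c j := by
      have := hsplit c
      linarith [hcs]
    have h3 : t * ∑ j ∈ G, c j ≤ t * ((N : ℝ) - ∑ j ∈ L, c j) :=
      mul_le_mul_of_nonneg_left h2 ht0
    have hcard : ∑ j ∈ L, (1 : ℝ) = N := by
      rw [Finset.sum_const, nsmul_eq_mul, mul_one]; exact seym_card_filter_lt hN
    have h4 : t * ((N : ℝ) - ∑ j ∈ L, c j) = ∑ j ∈ L, t * (1 - c j) := by
      rw [← hcard, ← Finset.sum_sub_distrib, Finset.mul_sum]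
    have h5 : ∑ j ∈ L, t * (1 - c j) ≤ ∑ j ∈ L, a j * (1 - c j) :=
      Finset.sum_le_sum fun j hj =>
        mul_le_mul_of_nonneg_right (htle j hj) (by linarith [hc1 j])
    have := hsplit (fun j => a j * c j)
    have hfin : ∑ j ∈ L, (a j * c j + a j * (1 - c j)) = ∑ j ∈ L, a j := by
      apply Finset.sum_congr rfl; intro j _; ring
    calc ∑ j, a j * c j = ∑ j ∈ L, a j * c j + ∑ j ∈ G, a j * c j := this
      _ ≤ ∑ j ∈ L, a j * c j + ∑ j ∈ L, a j * (1 - c j) := by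
          have := le_trans h1 (le_trans h3 (le_of_eq h4))
          linarith [le_trans this h5]
      _ = ∑ j ∈ L, a j := by rw [← Finset.sum_add_distrib, hfin]
  · have hNk' : N = k := le_antisymm hN (Nat.le_of_not_lt hNk)
    have hLuniv : L = univ := by
      rw [hL]; apply Finset.filter_true_of_mem; intro j _
      exact hNk' ▸ j.2
    rw [hLuniv]
    exact Finset.sum_le_sum fun j _ => by
      have := mul_le_mul_of_nonneg_left (hc1 j) (ha0 j); simpa using this

lemma seym_eucl_sum_sq {k : ℕ} (w : EuclideanSpace ℝ (Fin k)) :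
    ∑ m, (w m) ^ 2 = ‖w‖ ^ 2 := by
  rw [← real_inner_self_eq_norm_sq]
  rw [real_inner_self_eq_norm_sq, EuclideanSpace.norm_eq, Real.sq_sqrt (by positivity)]
  simp [Real.norm_eq_abs, sq_abs]

lemma seym_sum_sq_comb {k : ℕ} (lam : Fin k → EuclideanSpace ℝ (Fin k))
    (hlam : Orthonormal ℝ lam) (b : Fin k → ℝ) :
    ∑ m, (∑ j, b j * lam j m) ^ 2 = ∑ j, (b j) ^ 2 := by
  have hw : ∀ m, (∑ j, b j • lam j) m = ∑ j, b j * lam j m := by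
    intro m; rw [WithLp.ofLp_sum, Finset.sum_apply]; simp [PiLp.smul_apply]
  calc ∑ m, (∑ j, b j * lam j m) ^ 2
      = ∑ m, ((∑ j, b j • lam j) m) ^ 2 := by simp_rw [hw]
    _ = ‖∑ j, b j • lam j‖ ^ 2 := seym_eucl_sum_sq _
    _ = ∑ j, (b j) ^ 2 := by
        rw [← real_inner_self_eq_norm_sq, hlam.inner_sum]
        simp [sq]

lemma seym_norm_sq_onb_comb {V : Type*} [NormedAddCommGroup V] [InnerProductSpace ℝ V]
    {ι : Type*} {φ : ι → V} (hφ : Orthonormal ℝ φ) (c : ι → ℝ) (t : Finset ι) :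
    ‖∑ j ∈ t, c j • φ j‖ ^ 2 = ∑ j ∈ t, (c j) ^ 2 := by
  rw [← real_inner_self_eq_norm_sq, hφ.inner_sum]
  simp [sq]

end Helpers

/-- Schmidt–Eckart–Young–Mirsky, subspace form: the span of the first `N` POD
modes minimizes the squared ℓ²-projection error over all `N`-dimensional subspaces, and the
minimum equals the sum of the squared singular values with index > N. -/
theorem schmidt_eckart_young_mirsky
    {V : Type*} [NormedAddCommGroup V] [InnerProductSpace ℝ V] [FiniteDimensional ℝ V]
    {k : ℕ} (N : ℕ) (hN : N ≤ k)
    (s : Fin k → V) (σ : Fin k → ℝ) (φ : Fin k → V)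
    (lam : Fin k → EuclideanSpace ℝ (Fin k))
    (hσa : Antitone σ) (hσ0 : ∀ j, 0 ≤ σ j)
    (hφ : Orthonormal ℝ φ) (hlam : Orthonormal ℝ lam)
    (hs : ∀ m, s m = ∑ j, (σ j * lam j m) • φ j) :
    (∑ m, ‖s m - (Submodule.orthogonalProjection
        (Submodule.span ℝ (Set.range fun n : Fin N => φ (Fin.castLE hN n))) (s m) : V)‖ ^ 2
      = ∑ j ∈ univ.filter fun j : Fin k => N ≤ (j : ℕ), σ j ^ 2)
    ∧ ∀ X : Submodule ℝ V, Module.finrank ℝ X = N →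
        (∑ j ∈ univ.filter fun j : Fin k => N ≤ (j : ℕ), σ j ^ 2)
          ≤ ∑ m, ‖s m - (Submodule.orthogonalProjection X (s m) : V)‖ ^ 2 := by
  classical
  have filter_ge_eq : (univ.filter fun j : Fin k => N ≤ (j : ℕ))
      = univ.filter fun j : Fin k => ¬ ((j : ℕ) < N) := by
    apply Finset.filter_congr; intro j _; simp [Nat.not_lt]
  -- unit norms of lam
  have hlamnorm : ∀ j, ∑ m, (lam j m) ^ 2 = 1 := by
    intro j
    rw [seym_eucl_sum_sq]
    rw [hlam.1 j]; norm_num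
  constructor
  · -- Part 1
    set K := Submodule.span ℝ (Set.range fun n : Fin N => φ (Fin.castLE hN n)) with hK
    have hproj : ∀ m, (Submodule.orthogonalProjection K (s m) : V)
        = ∑ j ∈ univ.filter (fun j : Fin k => (j : ℕ) < N), (σ j * lam j m) • φ j := by
      intro m
      apply Submodule.eq_starProjection_of_mem_of_inner_eq_zero
      · apply Submodule.sum_mem
        intro j hj
        apply Submodule.smul_mem
        apply Submodule.subset_span
        exact ⟨⟨(j : ℕ), (Finset.mem_filter.1 hj).2⟩, rfl⟩
      · -- s m minus the partial sum is orthogonal to each generator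
        have hrest : s m - ∑ j ∈ univ.filter (fun j : Fin k => (j : ℕ) < N), (σ j * lam j m) • φ j
            = ∑ j ∈ univ.filter (fun j : Fin k => ¬ ((j : ℕ) < N)), (σ j * lam j m) • φ j := by
          rw [hs m, ← Finset.sum_filter_add_sum_filter_not univ (fun j : Fin k => (j : ℕ) < N)
            (fun j => (σ j * lam j m) • φ j)]
          abel
        intro w hw
        rw [hrest]
        induction hw using Submodule.span_induction with
        | mem x hx =>
          obtain ⟨n, rfl⟩ := hx
          rw [sum_inner]
          apply Finset.sum_eq_zero
          intro j hj
          have hjN : ¬ ((j : ℕ) < N) := (Finset.mem_filter.1 hj).2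
          rw [real_inner_smul_left]
          have : ⟪φ j, φ (Fin.castLE hN n)⟫ = 0 := by
            apply hφ.2
            intro h
            apply hjN
            rw [h]
            simpa using n.2
          rw [this, mul_zero]
        | zero => simp
        | add x y _ _ hx hy => rw [inner_add_right, hx, hy, add_zero]
        | smul a x _ hx => rw [real_inner_smul_right, hx, mul_zero]
    calc ∑ m, ‖s m - (Submodule.orthogonalProjection K (s m) : V)‖ ^ 2
        = ∑ m, ∑ j ∈ univ.filter (fun j : Fin k => ¬ ((j : ℕ) < N)), (σ j * lam j m) ^ 2 := by
          apply Finset.sum_congr rfl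
          intro m _
          rw [hproj m]
          have hrest : s m - ∑ j ∈ univ.filter (fun j : Fin k => (j : ℕ) < N),
              (σ j * lam j m) • φ j
              = ∑ j ∈ univ.filter (fun j : Fin k => ¬ ((j : ℕ) < N)), (σ j * lam j m) • φ j := by
            rw [hs m, ← Finset.sum_filter_add_sum_filter_not univ (fun j : Fin k => (j : ℕ) < N)
              (fun j => (σ j * lam j m) • φ j)]
            abel
          rw [hrest, seym_norm_sq_onb_comb hφ]
      _ = ∑ j ∈ univ.filter (fun j : Fin k => ¬ ((j : ℕ) < N)), ∑ m, (σ j * lam j m) ^ 2 :=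
          Finset.sum_comm
      _ = ∑ j ∈ univ.filter fun j : Fin k => N ≤ (j : ℕ), σ j ^ 2 := by
          rw [filter_ge_eq]
          apply Finset.sum_congr rfl
          intro j _
          simp_rw [mul_pow, ← Finset.mul_sum, hlamnorm j, mul_one]
  · -- Part 2
    intro X hX
    -- orthonormal basis of X
    let b : OrthonormalBasis (Fin N) ℝ X :=
      (stdOrthonormalBasis ℝ X).reindex (finCongr hX)
    set u : Fin N → V := fun i => (b i : V) with hu
    have hu_on : Orthonormal ℝ u := by
      rw [orthonormal_iff_ite]
      intro i j
      have := orthonormal_iff_ite.1 b.orthonormal i j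
      rw [← this]
      simp [hu, Submodule.coe_inner]
    -- projection formula
    have hPX : ∀ y : V, (Submodule.orthogonalProjection X y : V) = ∑ i, ⟪u i, y⟫ • u i := by
      intro y
      rw [b.orthogonalProjectionOnto_apply_eq_sum]
      push_cast
      simp [hu]
    have hPXnorm : ∀ y : V, ‖(Submodule.orthogonalProjection X y : V)‖ ^ 2 = ∑ i, ⟪u i, y⟫ ^ 2 := by
      intro y
      rw [hPX y]
      simpa using seym_norm_sq_onb_comb hu_on (fun i => ⟪u i, y⟫) Finset.univ
    -- Pythagoras: error = total - captured
    have hpyth : ∀ y : V, ‖y - (Submodule.orthogonalProjection X y : V)‖ ^ 2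
        = ‖y‖ ^ 2 - ‖(Submodule.orthogonalProjection X y : V)‖ ^ 2 := by
      intro y
      have horth : ⟪y - (Submodule.orthogonalProjection X y : V), (Submodule.orthogonalProjection X y : V)⟫ = 0 :=
        Submodule.starProjection_inner_eq_zero y _ (Submodule.orthogonalProjection X y).2
      have := norm_sub_sq_real y ((Submodule.orthogonalProjection X y : V))
      have hyP : ⟪y, (Submodule.orthogonalProjection X y : V)⟫
          = ‖(Submodule.orthogonalProjection X y : V)‖ ^ 2 := by
        have h2 : ⟪y - (Submodule.orthogonalProjection X y : V), (Submodule.orthogonalProjection X y : V)⟫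
            = ⟪y, (Submodule.orthogonalProjection X y : V)⟫
              - ⟪(Submodule.orthogonalProjection X y : V), (Submodule.orthogonalProjection X y : V)⟫ := by
          rw [inner_sub_left]
        rw [horth] at h2
        rw [real_inner_self_eq_norm_sq] at h2
        linarith
      rw [this, hyP]
      ring
    -- total energy
    have htotal : ∑ m, ‖s m‖ ^ 2 = ∑ j, σ j ^ 2 := by
      calc ∑ m, ‖s m‖ ^ 2 = ∑ m, ∑ j, (σ j * lam j m) ^ 2 := by
            apply Finset.sum_congr rfl
            intro m _
            rw [hs m]
            simpa using seym_norm_sq_onb_comb hφ (fun j => σ j * lam j m) Finset.univ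
        _ = ∑ j, ∑ m, (σ j * lam j m) ^ 2 := Finset.sum_comm
        _ = ∑ j, σ j ^ 2 := by
            apply Finset.sum_congr rfl
            intro j _
            simp_rw [mul_pow, ← Finset.mul_sum, hlamnorm j, mul_one]
    -- inner products with a fixed vector
    have hinner : ∀ (w : V) (m : Fin k), ⟪s m, w⟫ = ∑ j, (σ j * ⟪φ j, w⟫) * lam j m := by
      intro w m
      rw [hs m, sum_inner]
      apply Finset.sum_congr rfl
      intro j _
      rw [real_inner_smul_left]
      ring
    have hsum_inner_sq : ∀ w : V, ∑ m, ⟪s m, w⟫ ^ 2 = ∑ j, σ j ^ 2 * ⟪φ j, w⟫ ^ 2 := by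
      intro w
      calc ∑ m, ⟪s m, w⟫ ^ 2
          = ∑ m, (∑ j, (σ j * ⟪φ j, w⟫) * lam j m) ^ 2 := by
            apply Finset.sum_congr rfl; intro m _; rw [hinner w m]
        _ = ∑ j, (σ j * ⟪φ j, w⟫) ^ 2 := seym_sum_sq_comb lam hlam _
        _ = ∑ j, σ j ^ 2 * ⟪φ j, w⟫ ^ 2 := by
            apply Finset.sum_congr rfl; intro j _; ring
    -- captured energy
    set c : Fin k → ℝ := fun j => ∑ i, ⟪φ j, u i⟫ ^ 2 with hc
    have hcap : ∑ m, ‖(Submodule.orthogonalProjection X (s m) : V)‖ ^ 2 = ∑ j, σ j ^ 2 * c j := by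
      calc ∑ m, ‖(Submodule.orthogonalProjection X (s m) : V)‖ ^ 2
          = ∑ m, ∑ i, ⟪u i, s m⟫ ^ 2 := by
            apply Finset.sum_congr rfl; intro m _; exact hPXnorm (s m)
        _ = ∑ i, ∑ m, ⟪s m, u i⟫ ^ 2 := by
            rw [Finset.sum_comm]
            apply Finset.sum_congr rfl; intro i _
            apply Finset.sum_congr rfl; intro m _
            rw [real_inner_comm]
        _ = ∑ i, ∑ j, σ j ^ 2 * ⟪φ j, u i⟫ ^ 2 := by
            apply Finset.sum_congr rfl; intro i _; exact hsum_inner_sq (u i)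
        _ = ∑ j, σ j ^ 2 * c j := by
            rw [Finset.sum_comm]
            apply Finset.sum_congr rfl; intro j _
            rw [hc, Finset.mul_sum]
    -- bounds on c
    have hc0 : ∀ j, 0 ≤ c j := fun j => Finset.sum_nonneg fun i _ => sq_nonneg _
    have hc1 : ∀ j, c j ≤ 1 := by
      intro j
      have := hu_on.sum_inner_products_le (φ j) (s := Finset.univ)
      have hφn : ‖φ j‖ = 1 := hφ.1 j
      calc c j = ∑ i, ‖⟪u i, φ j⟫‖ ^ 2 := by
            apply Finset.sum_congr rfl; intro i _
            rw [real_inner_comm, Real.norm_eq_abs, sq_abs]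
        _ ≤ ‖φ j‖ ^ 2 := this
        _ = 1 := by rw [hφn]; norm_num
    have hcs : ∑ j, c j ≤ (N : ℝ) := by
      have : ∑ j, c j = ∑ i : Fin N, ∑ j, ⟪φ j, u i⟫ ^ 2 := by
        rw [Finset.sum_comm]
      rw [this]
      have hbound : ∀ i : Fin N, ∑ j, ⟪φ j, u i⟫ ^ 2 ≤ 1 := by
        intro i
        have := hφ.sum_inner_products_le (u i) (s := Finset.univ)
        have hun : ‖u i‖ = 1 := hu_on.1 i
        calc ∑ j, ⟪φ j, u i⟫ ^ 2 = ∑ j, ‖⟪φ j, u i⟫‖ ^ 2 := by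
              apply Finset.sum_congr rfl; intro j _
              rw [Real.norm_eq_abs, sq_abs]
          _ ≤ ‖u i‖ ^ 2 := this
          _ = 1 := by rw [hun]; norm_num
      calc ∑ i : Fin N, ∑ j, ⟪φ j, u i⟫ ^ 2 ≤ ∑ i : Fin N, (1 : ℝ) :=
            Finset.sum_le_sum fun i _ => hbound i
        _ = N := by simp
    -- conclude via rearrangement
    have hkey : ∑ j, σ j ^ 2 * c j
        ≤ ∑ j ∈ univ.filter (fun j : Fin k => (j : ℕ) < N), σ j ^ 2 := by
      apply seym_rearrange hN _ _ _ (fun j => sq_nonneg _) hc0 hc1 hcs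
      intro i j hij
      have h1 : σ j ≤ σ i := hσa hij
      have h2 : 0 ≤ σ j := hσ0 j
      show σ j ^ 2 ≤ σ i ^ 2
      nlinarith
    have hsplit : ∑ j, σ j ^ 2
        = ∑ j ∈ univ.filter (fun j : Fin k => (j : ℕ) < N), σ j ^ 2
          + ∑ j ∈ univ.filter (fun j : Fin k => ¬ ((j : ℕ) < N)), σ j ^ 2 :=
      (Finset.sum_filter_add_sum_filter_not univ _ _).symm
    have herr : ∑ m, ‖s m - (Submodule.orthogonalProjection X (s m) : V)‖ ^ 2
        = ∑ j, σ j ^ 2 - ∑ j, σ j ^ 2 * c j := by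
      rw [← htotal, ← hcap, ← Finset.sum_sub_distrib]
      apply Finset.sum_congr rfl
      intro m _
      exact hpyth (s m)
    rw [herr, filter_ge_eq]
    linarith [hkey, hsplit]
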